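/- Let I and J be ideals of A with J ⊆ I. If I^n ∩ J ⊆ I^{n-1}·J for all n ≥ 1, then I^n ∩ J = I·(I^{n-1} ∩ J) for all n ≥ 2; consequently the medium and strong Artin-Rees numbers satisfy m(J,A;I) = s(J,A;I) = 1. -/

import Mathlib

/-- The strong Artin-Rees number `s(J,A;I)`: the least `s ≥ 1` with
`I^n ∩ J = I·(I^{n-1} ∩ J)` for all `n ≥ s+1`. -/
noncomputable def strongAR {A : Type*} [CommRing A] (I J : Ideal A) : ℕ :=
  sInf {s : ℕ | 1 ≤ s ∧ ∀ n, s + 1 ≤ n → I ^ n ⊓ J = I * (I ^ (n - 1) ⊓ J)}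

/-- The medium Artin-Rees number `m(J,A;I) = 1 + card{n ≥ 2 : E(J,A;I)_n ≠ 0}`. -/
noncomputable def mediumAR {A : Type*} [CommRing A] (I J : Ideal A) : ℕ :=
  1 + {n : ℕ | 2 ≤ n ∧ I ^ n ⊓ J ≠ I * (I ^ (n - 1) ⊓ J)}.ncard

/-- The weak Artin-Rees number `w(J,A;I)`: the least `s ≥ 1` with
`I^n ∩ J ⊆ I^{n-s}·J` for all `n ≥ s`. -/
noncomputable def weakAR {A : Type*} [CommRing A] (I J : Ideal A) : ℕ :=
  sInf {s : ℕ | 1 ≤ s ∧ ∀ n, s ≤ n → I ^ n ⊓ J ≤ I ^ (n - s) * J}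

/-- If `J ⊆ I` and `I^n ∩ J ⊆ I^{n-1}·J` for all `n ≥ 1`, then
`I^n ∩ J = I·(I^{n-1} ∩ J)` for all `n ≥ 2`; consequently `m(J,A;I) = s(J,A;I) = 1`. -/
theorem stmt_8 {A : Type*} [CommRing A] [IsNoetherianRing A] (I J : Ideal A)
    (hJI : J ≤ I) (h : ∀ n, 1 ≤ n → I ^ n ⊓ J ≤ I ^ (n - 1) * J) :
    (∀ n, 2 ≤ n → I ^ n ⊓ J = I * (I ^ (n - 1) ⊓ J)) ∧
    mediumAR I J = 1 ∧ strongAR I J = 1 := by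
  have key : ∀ n, 2 ≤ n → I ^ n ⊓ J = I * (I ^ (n - 1) ⊓ J) := by
    intro n hn
    obtain ⟨m, rfl⟩ : ∃ m, n = m + 2 := ⟨n - 2, by omega⟩
    apply le_antisymm
    · calc I ^ (m + 2) ⊓ J ≤ I ^ (m + 2 - 1) * J := h (m + 2) (by omega)
        _ = I * (I ^ m * J) := by
            rw [show m + 2 - 1 = m + 1 from rfl, pow_succ', mul_assoc]
        _ ≤ I * (I ^ (m + 2 - 1) ⊓ J) := by
            refine Ideal.mul_mono_right (le_inf ?_ Ideal.mul_le_right)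
            calc I ^ m * J ≤ I ^ m * I := Ideal.mul_mono_right hJI
              _ = I ^ (m + 2 - 1) := (pow_succ I m).symm
    · refine le_inf ?_ (le_trans Ideal.mul_le_right inf_le_right)
      calc I * (I ^ (m + 2 - 1) ⊓ J) ≤ I * I ^ (m + 1) := Ideal.mul_mono_right inf_le_left
        _ = I ^ (m + 2) := (pow_succ' I (m + 1)).symm
  refine ⟨key, ?_, ?_⟩
  · have : {n : ℕ | 2 ≤ n ∧ I ^ n ⊓ J ≠ I * (I ^ (n - 1) ⊓ J)} = ∅ := by
      ext n; simp only [Set.mem_setOf_eq, Set.mem_empty_iff_false, iff_false, not_and]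
      intro hn; simpa using key n hn
    rw [mediumAR, this, Set.ncard_empty]
  · have h1 : 1 ∈ {s : ℕ | 1 ≤ s ∧ ∀ n, s + 1 ≤ n → I ^ n ⊓ J = I * (I ^ (n - 1) ⊓ J)} :=
      ⟨le_refl 1, fun n hn => key n hn⟩
    refine le_antisymm (Nat.sInf_le h1) (le_csInf ⟨1, h1⟩ fun s hs => hs.1)
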